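/- Uniqueness part of Pauli's theorem, odd case: Let Cl(p,q) have odd dimension n = p+q and let γ^a, β^a satisfy the Clifford relations. If T₁ and T₂ are invertible and γ^a = T₁^{-1} β^a T₁ = T₂^{-1} β^a T₂ for all a = 1,...,n, then T₁ T₂^{-1} lies in the center of Cl(p,q), i.e. T₁ = Z T₂ for some invertible central element Z ∈ span{e, e^{1...n}}. -/

import Mathlib

def cliffProd {n : ℕ} {A : Type*} [Ring A] (e : Fin n → A) (s : Finset (Fin n)) : A :=
  ((s.sort (· ≤ ·)).map e).prod

def eta (p : ℕ) {n : ℕ} (a b : Fin n) : ℤ :=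
  if a = b then (if (a : ℕ) < p then 1 else -1) else 0

namespace Pauli17
set_option linter.unusedSectionVars false

variable {F : Type*} [Field F] [CharZero F] {A : Type*} [Ring A] [Algebra F A] {n : ℕ}

/-- product over a list of indices -/
def lp (δ : Fin n → A) (l : List (Fin n)) : A := (l.map δ).prod

@[simp] lemma lp_nil (δ : Fin n → A) : lp δ [] = 1 := rfl

@[simp] lemma lp_cons (δ : Fin n → A) (a : Fin n) (l : List (Fin n)) :
    lp δ (a :: l) = δ a * lp δ l := by simp [lp]

lemma lp_append (δ : Fin n → A) (l l' : List (Fin n)) :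
    lp δ (l ++ l') = lp δ l * lp δ l' := by simp [lp]

lemma cliffProd_eq_lp (δ : Fin n → A) (s : Finset (Fin n)) :
    cliffProd δ s = lp δ (s.sort (· ≤ ·)) := rfl

@[simp] lemma cliffProd_empty (δ : Fin n → A) : cliffProd δ (∅ : Finset (Fin n)) = 1 := by
  simp [cliffProd]

lemma smul_cancel {c : F} (hc : c ≠ 0) {x y : A} (h : c • x = c • y) : x = y := by
  have := congrArg (fun z => c⁻¹ • z) h
  simpa [smul_smul, inv_mul_cancel₀ hc] using this

section rels

variable (F) in
/-- sign picked up conjugating the product over `s` by generator `a` -/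
def sgn (s : Finset (Fin n)) (a : Fin n) : F := (-1 : F) ^ (s.erase a).card

variable {δ : Fin n → A} {η' : Fin n → F}

lemma mul_lp_of_not_mem (hac : ∀ a b : Fin n, a ≠ b → δ a * δ b = -(δ b * δ a))
    {a : Fin n} : ∀ {l : List (Fin n)}, a ∉ l →
    δ a * lp δ l = ((-1 : F) ^ l.length) • (lp δ l * δ a)
  | [], _ => by simp
  | b :: t, h => by
    have hab : a ≠ b := fun e => h (e ▸ List.mem_cons_self)
    have hat : a ∉ t := fun e => h (List.mem_cons_of_mem _ e)
    have ih := mul_lp_of_not_mem hac hat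
    calc δ a * lp δ (b :: t) = (δ a * δ b) * lp δ t := by rw [lp_cons, ← mul_assoc]
      _ = -(δ b * (δ a * lp δ t)) := by rw [hac a b hab, neg_mul, mul_assoc]
      _ = -(δ b * (((-1 : F) ^ t.length) • (lp δ t * δ a))) := by rw [ih]
      _ = ((-1 : F) ^ (b :: t).length) • (lp δ (b :: t) * δ a) := by
          rw [mul_smul_comm, ← neg_smul, lp_cons, List.length_cons, pow_succ]
          rw [mul_comm ((-1:F) ^ t.length) (-1), neg_one_mul, mul_assoc]

lemma lp_mul_of_not_mem (hac : ∀ a b : Fin n, a ≠ b → δ a * δ b = -(δ b * δ a))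
    {a : Fin n} {l : List (Fin n)} (h : a ∉ l) :
    lp δ l * δ a = ((-1 : F) ^ l.length) • (δ a * lp δ l) := by
  rw [mul_lp_of_not_mem (F := F) hac h, smul_smul, ← mul_pow]
  norm_num

lemma sandwich_not_mem (hsq : ∀ a, δ a * δ a = η' a • 1)
    (hac : ∀ a b : Fin n, a ≠ b → δ a * δ b = -(δ b * δ a))
    {a : Fin n} {l : List (Fin n)} (h : a ∉ l) :
    δ a * lp δ l * δ a = (η' a * (-1 : F) ^ l.length) • lp δ l := by
  rw [mul_assoc, lp_mul_of_not_mem (F := F) hac h, mul_smul_comm, ← mul_assoc, hsq]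
  rw [smul_mul_assoc, one_mul, smul_smul, mul_comm]

lemma sandwich_mem (hsq : ∀ a, δ a * δ a = η' a • 1)
    (hac : ∀ a b : Fin n, a ≠ b → δ a * δ b = -(δ b * δ a))
    {a : Fin n} : ∀ {l : List (Fin n)}, l.Nodup → a ∈ l →
    δ a * lp δ l * δ a = (η' a * (-1 : F) ^ (l.length - 1)) • lp δ l
  | [], _, hm => absurd hm List.not_mem_nil
  | b :: t, hnd, hm => by
    rcases List.mem_cons.mp hm with rfl | hat
    · have hat : a ∉ t := (List.nodup_cons.mp hnd).1
      calc δ a * lp δ (a :: t) * δ a = ((δ a * δ a) * lp δ t) * δ a := by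
            rw [lp_cons, ← mul_assoc]
        _ = η' a • (lp δ t * δ a) := by rw [hsq, smul_mul_assoc, one_mul, smul_mul_assoc]
        _ = η' a • (((-1 : F) ^ t.length) • (δ a * lp δ t)) := by
            rw [lp_mul_of_not_mem (F := F) hac hat]
        _ = (η' a * (-1 : F) ^ ((a :: t).length - 1)) • lp δ (a :: t) := by
            rw [smul_smul, lp_cons, List.length_cons, Nat.add_sub_cancel]
    · have hab : a ≠ b := fun e => (List.nodup_cons.mp hnd).1 (e ▸ hat)
      have ih := sandwich_mem hsq hac (List.nodup_cons.mp hnd).2 hat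
      have ht1 : 1 ≤ t.length := by
        cases t with
        | nil => exact absurd hat List.not_mem_nil
        | cons c u => simp
      calc δ a * lp δ (b :: t) * δ a = (δ a * δ b) * lp δ t * δ a := by
            rw [lp_cons, ← mul_assoc]
        _ = -(δ b * (δ a * lp δ t * δ a)) := by
            simp only [hac a b hab, neg_mul, mul_assoc]
        _ = -(δ b * ((η' a * (-1 : F) ^ (t.length - 1)) • lp δ t)) := by rw [ih]
        _ = (η' a * (-1 : F) ^ ((b :: t).length - 1)) • lp δ (b :: t) := by
            rw [mul_smul_comm, ← neg_smul, lp_cons, List.length_cons, Nat.add_sub_cancel]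
            congr 1
            have : t.length = (t.length - 1) + 1 := (Nat.sub_add_cancel ht1).symm
            rw [this, pow_succ, Nat.add_sub_cancel]
            ring

lemma sandwich_cliff (hsq : ∀ a, δ a * δ a = η' a • 1)
    (hac : ∀ a b : Fin n, a ≠ b → δ a * δ b = -(δ b * δ a))
    (s : Finset (Fin n)) (a : Fin n) :
    δ a * cliffProd δ s * δ a = (η' a * sgn F s a) • cliffProd δ s := by
  rw [cliffProd_eq_lp]
  by_cases h : a ∈ s
  · rw [sandwich_mem hsq hac (s.sort_nodup _) (Finset.mem_sort _ |>.mpr h), sgn,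
      Finset.length_sort, Finset.card_erase_of_mem h]
  · rw [sandwich_not_mem hsq hac (fun hc => h (Finset.mem_sort _ |>.mp hc)), sgn,
      Finset.erase_eq_of_notMem h, Finset.length_sort]

lemma isUnit_lp (hsq : ∀ a, δ a * δ a = η' a • 1)
    (hpm : ∀ a, η' a = 1 ∨ η' a = -1) :
    ∀ l : List (Fin n), IsUnit (lp δ l)
  | [] => by simp
  | a :: t => by
    have h1 : δ a * (η' a • δ a) = 1 := by
      rw [mul_smul_comm, hsq, smul_smul]
      rcases hpm a with h | h <;> rw [h] <;> norm_num
    have h2 : (η' a • δ a) * δ a = 1 := by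
      rw [smul_mul_assoc, hsq, smul_smul]
      rcases hpm a with h | h <;> rw [h] <;> norm_num
    have : IsUnit (δ a) := ⟨⟨δ a, η' a • δ a, h1, h2⟩, rfl⟩
    rw [lp_cons]
    exact this.mul (isUnit_lp hsq hpm t)

/-- the scalar square of an ordered product -/
def sqc (η' : Fin n → F) : List (Fin n) → F
  | [] => 1
  | a :: t => (-1) ^ t.length * η' a * sqc η' t

lemma sqc_pm (hpm : ∀ a, η' a = 1 ∨ η' a = -1) :
    ∀ l : List (Fin n), sqc η' l = 1 ∨ sqc η' l = -1
  | [] => Or.inl rfl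
  | a :: t => by
    have ih := sqc_pm hpm t
    have hp : ((-1 : F) ^ t.length = 1) ∨ ((-1 : F) ^ t.length = -1) := by
      rcases Nat.even_or_odd t.length with h | h
      · exact Or.inl h.neg_one_pow
      · exact Or.inr h.neg_one_pow
    rw [sqc]
    rcases ih with h1 | h1 <;> rcases hp with h2 | h2 <;> rcases hpm a with h3 | h3 <;>
      rw [h1, h2, h3] <;> norm_num

lemma lp_sq (hsq : ∀ a, δ a * δ a = η' a • 1)
    (hac : ∀ a b : Fin n, a ≠ b → δ a * δ b = -(δ b * δ a)) :
    ∀ {l : List (Fin n)}, l.Nodup → lp δ l * lp δ l = sqc η' l • 1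
  | [], _ => by simp [sqc]
  | a :: t, hnd => by
    have hat : a ∉ t := (List.nodup_cons.mp hnd).1
    have ih := lp_sq hsq hac (List.nodup_cons.mp hnd).2
    calc lp δ (a :: t) * lp δ (a :: t) = δ a * (lp δ t * δ a) * lp δ t := by
          rw [lp_cons, mul_assoc, ← mul_assoc (lp δ t), ← mul_assoc, ← mul_assoc]
      _ = ((-1 : F) ^ t.length) • ((δ a * δ a) * (lp δ t * lp δ t)) := by
          rw [lp_mul_of_not_mem (F := F) hac hat, mul_smul_comm, smul_mul_assoc]
          rw [mul_assoc, mul_assoc, ← mul_assoc (δ a)]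
      _ = sqc η' (a :: t) • 1 := by
          rw [hsq, ih, smul_mul_assoc, one_mul, smul_smul, smul_smul, sqc, mul_assoc]

lemma lp_perm (hac : ∀ a b : Fin n, a ≠ b → δ a * δ b = -(δ b * δ a))
    {l l' : List (Fin n)} (hp : l.Perm l') :
    l.Nodup → ∃ ε : F, (ε = 1 ∨ ε = -1) ∧ lp δ l = ε • lp δ l' := by
  induction hp with
  | nil => exact fun _ => ⟨1, Or.inl rfl, by simp⟩
  | cons x _ ih =>
    intro hnd
    obtain ⟨ε, hε, he⟩ := ih (List.nodup_cons.mp hnd).2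
    exact ⟨ε, hε, by rw [lp_cons, lp_cons, he, mul_smul_comm]⟩
  | swap x y t =>
    intro hnd
    have hxy : y ≠ x := (List.nodup_cons.mp hnd).1 ∘ (by intro h; exact h ▸ List.mem_cons_self)
    refine ⟨-1, Or.inr rfl, ?_⟩
    rw [lp_cons, lp_cons, lp_cons, lp_cons, ← mul_assoc, hac y x hxy]
    simp [mul_assoc]
  | trans h1 _ ih1 ih2 =>
    intro hnd
    obtain ⟨ε₁, hε₁, he₁⟩ := ih1 hnd
    obtain ⟨ε₂, hε₂, he₂⟩ := ih2 (h1.nodup_iff.mp hnd)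
    refine ⟨ε₁ * ε₂, ?_, by rw [he₁, he₂, smul_smul]⟩
    rcases hε₁ with h | h <;> rcases hε₂ with h' | h' <;> rw [h, h'] <;> norm_num

lemma cliff_mul_compl (hac : ∀ a b : Fin n, a ≠ b → δ a * δ b = -(δ b * δ a))
    (s : Finset (Fin n)) :
    ∃ ε : F, (ε = 1 ∨ ε = -1) ∧
      cliffProd δ s * cliffProd δ sᶜ = ε • cliffProd δ Finset.univ := by
  have hnd : (s.sort (· ≤ ·) ++ sᶜ.sort (· ≤ ·)).Nodup := by
    refine List.Nodup.append (s.sort_nodup _) (sᶜ.sort_nodup _) ?_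
    intro a ha ha'
    rw [Finset.mem_sort] at ha ha'
    exact (Finset.mem_compl.mp ha') ha
  have hperm : (s.sort (· ≤ ·) ++ sᶜ.sort (· ≤ ·)).Perm
      ((Finset.univ : Finset (Fin n)).sort (· ≤ ·)) := by
    apply List.perm_of_nodup_nodup_toFinset_eq hnd (Finset.sort_nodup _ _)
    ext a
    simp [Finset.mem_sort]
  obtain ⟨ε, hε, he⟩ := lp_perm (F := F) hac hperm hnd
  exact ⟨ε, hε, by rw [cliffProd_eq_lp, cliffProd_eq_lp, ← lp_append, he, cliffProd_eq_lp]⟩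

lemma neg_one_pow_eq_iff {j k : ℕ} :
    ((-1 : F) ^ j = (-1 : F) ^ k) ↔ (j % 2 = k % 2) := by
  have h : ∀ m : ℕ, (-1 : F) ^ m = if m % 2 = 0 then 1 else -1 := by
    intro m
    rcases Nat.even_or_odd m with h | h
    · rw [h.neg_one_pow, if_pos (Nat.even_iff.mp h)]
    · rw [h.neg_one_pow, if_neg (by rw [Nat.odd_iff] at h; omega)]
  rw [h, h]
  constructor
  · intro he
    by_cases h1 : j % 2 = 0 <;> by_cases h2 : k % 2 = 0 <;>
      simp only [h1, h2, if_true, if_false, if_pos, if_neg, not_false_iff] at he ⊢ <;>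
      first | omega | norm_num at he
  · intro he
    rw [he]

lemma sgn_pm (s : Finset (Fin n)) (a : Fin n) : sgn F s a = 1 ∨ sgn F s a = -1 := by
  rcases Nat.even_or_odd (s.erase a).card with h | h
  · exact Or.inl h.neg_one_pow
  · exact Or.inr h.neg_one_pow

lemma sgn_mul_self (s : Finset (Fin n)) (a : Fin n) : sgn F s a * sgn F s a = 1 := by
  rcases sgn_pm (F := F) (n := n) s a with h | h <;> rw [h] <;> norm_num

lemma erase_card_mod (s : Finset (Fin n)) (a : Fin n) :
    (s.erase a).card = if a ∈ s then s.card - 1 else s.card := by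
  by_cases h : a ∈ s
  · rw [if_pos h, Finset.card_erase_of_mem h]
  · rw [if_neg h, Finset.erase_eq_of_notMem h]

lemma sgn_compl (hodd : Odd n) (t : Finset (Fin n)) (a : Fin n) :
    sgn F tᶜ a = sgn F t a := by
  have hc : tᶜ.card = n - t.card := by rw [Finset.card_compl, Fintype.card_fin]
  have hle : t.card ≤ n := by simpa using t.card_le_univ
  rw [Nat.odd_iff] at hodd
  rw [sgn, sgn, neg_one_pow_eq_iff]
  by_cases h : a ∈ t
  · have h1t : 1 ≤ t.card := Finset.card_pos.mpr ⟨a, h⟩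
    rw [Finset.erase_eq_of_notMem (by simpa using h), Finset.card_erase_of_mem h, hc]
    omega
  · have h1c : 1 ≤ tᶜ.card := Finset.card_pos.mpr ⟨a, by simpa using h⟩
    rw [Finset.card_erase_of_mem (by simpa using h), Finset.erase_eq_of_notMem h, hc]
    omega

lemma sgn_forcing (hodd : Odd n) {s t : Finset (Fin n)}
    (h : ∀ a, sgn F s a = sgn F t a) : s = t ∨ s = tᶜ := by
  have hm : ∀ a : Fin n, (s.erase a).card % 2 = (t.erase a).card % 2 := fun a => by
    have := h a
    rw [sgn, sgn, neg_one_pow_eq_iff] at this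
    exact this
  have hsc : ∀ a : Fin n, a ∈ s → 1 ≤ s.card := fun a h => Finset.card_pos.mpr ⟨a, h⟩
  have htc : ∀ a : Fin n, a ∈ t → 1 ≤ t.card := fun a h => Finset.card_pos.mpr ⟨a, h⟩
  by_cases hp : s.card % 2 = t.card % 2
  · left
    ext a
    have h1 := hm a
    rw [erase_card_mod, erase_card_mod] at h1
    by_cases has : a ∈ s <;> by_cases hat : a ∈ t <;> simp [has, hat] at h1 ⊢
    · have := hsc a has; omega
    · have := htc a hat; omega
  · right
    ext a
    rw [Finset.mem_compl]
    have h1 := hm a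
    rw [erase_card_mod, erase_card_mod] at h1
    by_cases has : a ∈ s <;> by_cases hat : a ∈ t <;> simp [has, hat] at h1 ⊢
    · have := hsc a has; have := htc a hat; omega
    · omega

variable {δ : Fin n → A} {η' : Fin n → F}

lemma proj_step (hsq : ∀ a, δ a * δ a = η' a • 1)
    (hac : ∀ a b : Fin n, a ≠ b → δ a * δ b = -(δ b * δ a))
    (hpm : ∀ a, η' a = 1 ∨ η' a = -1)
    {w : Finset (Fin n) → F}
    (h0 : ∑ s : Finset (Fin n), w s • cliffProd δ s = 0) (t : Finset (Fin n)) (a : Fin n) :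
    ∑ s : Finset (Fin n), ((1 + sgn F t a * sgn F s a) * w s) • cliffProd δ s = 0 := by
  have hη : η' a * η' a = 1 := by rcases hpm a with h | h <;> rw [h] <;> norm_num
  have h2 := congrArg (fun X : A => X + (sgn F t a * η' a) • (δ a * X * δ a)) h0
  simp only [mul_zero, zero_mul, smul_zero, add_zero] at h2
  rw [← h2]
  rw [Finset.mul_sum, Finset.sum_mul, Finset.smul_sum, ← Finset.sum_add_distrib]
  apply Finset.sum_congr rfl
  intro s _
  rw [mul_smul_comm, smul_mul_assoc, sandwich_cliff hsq hac s a]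
  rw [smul_smul, smul_smul, add_mul, one_mul, add_smul]
  congr 2
  calc sgn F t a * sgn F s a * w s
      = (η' a * η' a) * (sgn F t a * sgn F s a * w s) := by rw [hη, one_mul]
    _ = sgn F t a * η' a * w s * (η' a * sgn F s a) := by ring

lemma proj_fold (hsq : ∀ a, δ a * δ a = η' a • 1)
    (hac : ∀ a b : Fin n, a ≠ b → δ a * δ b = -(δ b * δ a))
    (hpm : ∀ a, η' a = 1 ∨ η' a = -1)
    {w : Finset (Fin n) → F}
    (h0 : ∑ s : Finset (Fin n), w s • cliffProd δ s = 0) (t : Finset (Fin n))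
    (u : Finset (Fin n)) :
    ∑ s : Finset (Fin n), ((∏ a ∈ u, (1 + sgn F t a * sgn F s a)) * w s) • cliffProd δ s
      = 0 := by
  induction u using Finset.induction with
  | empty => simpa using h0
  | @insert a u ha ih =>
    have := proj_step hsq hac hpm ih t a
    rw [← this]
    apply Finset.sum_congr rfl
    intro s _
    rw [Finset.prod_insert ha, mul_assoc]

lemma indep_pair (hsq : ∀ a, δ a * δ a = η' a • 1)
    (hac : ∀ a b : Fin n, a ≠ b → δ a * δ b = -(δ b * δ a))
    (hpm : ∀ a, η' a = 1 ∨ η' a = -1) (hodd : Odd n)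
    {w : Finset (Fin n) → F}
    (h0 : ∑ s : Finset (Fin n), w s • cliffProd δ s = 0) (t : Finset (Fin n)) :
    w t • cliffProd δ t + w tᶜ • cliffProd δ tᶜ = 0 := by
  have hntc : t ≠ tᶜ := by
    intro h
    have := congrArg Finset.card h
    rw [Finset.card_compl, Fintype.card_fin] at this
    rw [Nat.odd_iff] at hodd
    have h2 : t.card ≤ n := by simpa using t.card_le_univ
    omega
  have hfold := proj_fold hsq hac hpm h0 t Finset.univ
  have hP : ∀ s : Finset (Fin n), s ≠ t → s ≠ tᶜ →
      (∏ a : Fin n, (1 + sgn F t a * sgn F s a)) = 0 := by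
    intro s hs1 hs2
    have : ¬ (∀ a, sgn F s a = sgn F t a) := by
      intro hall
      rcases sgn_forcing hodd hall with h | h
      · exact hs1 h
      · exact hs2 h
    push_neg at this
    obtain ⟨a, ha⟩ := this
    apply Finset.prod_eq_zero (Finset.mem_univ a)
    rcases sgn_pm (F := F) s a with h1 | h1 <;> rcases sgn_pm (F := F) t a with h2 | h2 <;>
      rw [h1, h2] <;> first | (exfalso; rw [h1, h2] at ha; exact ha rfl) | norm_num
  have h2 : ∀ a : Fin n, (1 : F) + sgn F t a * sgn F t a = 2 := fun a => by
    rw [sgn_mul_self]; norm_num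
  have hPt : (∏ a : Fin n, (1 + sgn F t a * sgn F t a)) = 2 ^ n := by
    rw [Finset.prod_congr rfl fun a _ => h2 a, Finset.prod_const, Finset.card_univ,
      Fintype.card_fin]
  have hPtc : (∏ a : Fin n, (1 + sgn F t a * sgn F tᶜ a)) = 2 ^ n := by
    rw [Finset.prod_congr rfl fun a _ => by rw [sgn_compl hodd, h2 a], Finset.prod_const,
      Finset.card_univ, Fintype.card_fin]
  have hsum : ∑ s : Finset (Fin n),
      ((∏ a : Fin n, (1 + sgn F t a * sgn F s a)) * w s) • cliffProd δ s
      = ((2:F) ^ n * w t) • cliffProd δ t + ((2:F) ^ n * w tᶜ) • cliffProd δ tᶜ := by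
    rw [← Finset.sum_subset (Finset.subset_univ ({t, tᶜ} : Finset (Finset (Fin n))))
      (fun s _ hs => by
        simp only [Finset.mem_insert, Finset.mem_singleton] at hs
        push_neg at hs
        rw [hP s hs.1 hs.2, zero_mul, zero_smul])]
    rw [Finset.sum_pair hntc, hPt, hPtc]
  rw [hsum] at hfold
  have h2n : ((2:F) ^ n) ≠ 0 := pow_ne_zero n two_ne_zero
  apply smul_cancel h2n (x := w t • cliffProd δ t + w tᶜ • cliffProd δ tᶜ) (y := 0)
  rw [smul_add, smul_smul, smul_smul, smul_zero]
  exact hfold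

lemma top_comm (hsq : ∀ a, δ a * δ a = η' a • 1)
    (hac : ∀ a b : Fin n, a ≠ b → δ a * δ b = -(δ b * δ a))
    (hpm : ∀ a, η' a = 1 ∨ η' a = -1) (hodd : Odd n) (a : Fin n) :
    δ a * cliffProd δ Finset.univ = cliffProd δ Finset.univ * δ a := by
  have hη : η' a * η' a = 1 := by rcases hpm a with h | h <;> rw [h] <;> norm_num
  have hsg : sgn F Finset.univ a = 1 := by
    rw [sgn, Finset.card_erase_of_mem (Finset.mem_univ a), Finset.card_univ, Fintype.card_fin]
    obtain ⟨k, hk⟩ := hodd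
    have h1 : n - 1 = 2 * k := by omega
    rw [h1, pow_mul]
    norm_num
  have hs := sandwich_cliff hsq hac Finset.univ a
  rw [hsg, mul_one] at hs
  have h3 : (δ a * cliffProd δ Finset.univ * δ a) * (η' a • δ a)
      = (η' a • cliffProd δ Finset.univ) * (η' a • δ a) := by rw [hs]
  simp only [mul_smul_comm, smul_mul_assoc, smul_smul, mul_assoc, hsq a, mul_one, hη,
    one_smul] at h3
  exact h3

lemma commute_lp {z : A} {δ : Fin n → A} (h : ∀ a, z * δ a = δ a * z) (l : List (Fin n)) :
    z * lp δ l = lp δ l * z := by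
  induction l with
  | nil => simp
  | cons a t ih => rw [lp_cons, ← mul_assoc, h, mul_assoc, ih, ← mul_assoc]

lemma commute_all {z : A} {δ : Fin n → A}
    (hspan : Submodule.span F (Set.range fun s : Finset (Fin n) => cliffProd δ s) = ⊤)
    (hcomm : ∀ s, z * cliffProd δ s = cliffProd δ s * z) (U : A) : z * U = U * z := by
  have hU : U ∈ Submodule.span F (Set.range fun s : Finset (Fin n) => cliffProd δ s) := by
    rw [hspan]; exact Submodule.mem_top
  induction hU using Submodule.span_induction with
  | mem x hx => obtain ⟨s, rfl⟩ := hx; exact hcomm s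
  | zero => simp
  | add x y _ _ hx hy => rw [mul_add, add_mul, hx, hy]
  | smul c x _ hx => rw [mul_smul_comm, smul_mul_assoc, hx]

end rels

section convert

variable (F) in
/-- the diagonal entries of η as scalars -/
def etaF (p : ℕ) {n : ℕ} (a : Fin n) : F := if (a : ℕ) < p then 1 else -1

lemma etaF_pm (p : ℕ) (a : Fin n) : etaF F p a = 1 ∨ etaF F p a = -1 := by
  unfold etaF; split <;> simp

lemma rel_sq {p : ℕ} {δ : Fin n → A}
    (h : ∀ a b : Fin n, δ a * δ b + δ b * δ a = ((2 * eta p a b : ℤ) : A)) (a : Fin n) :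
    δ a * δ a = etaF F p a • 1 := by
  have h1 := h a a
  rw [eta, if_pos rfl] at h1
  apply smul_cancel (two_ne_zero (α := F))
  rw [two_smul, h1]
  unfold etaF
  by_cases hp : (a : ℕ) < p
  · rw [if_pos hp, if_pos hp, smul_smul, mul_one, Algebra.smul_def, mul_one]
    push_cast
    simp [map_ofNat]
  · rw [if_neg hp, if_neg hp, smul_smul, Algebra.smul_def, mul_one]
    push_cast
    simp [map_ofNat]

lemma rel_ac {p : ℕ} {δ : Fin n → A}
    (h : ∀ a b : Fin n, δ a * δ b + δ b * δ a = ((2 * eta p a b : ℤ) : A)) {a b : Fin n}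
    (hab : a ≠ b) : δ a * δ b = -(δ b * δ a) := by
  have h1 := h a b
  rw [eta, if_neg hab] at h1
  norm_num at h1
  exact eq_neg_of_add_eq_zero_left h1

end convert

end Pauli17

open Pauli17

/-- Uniqueness part of Pauli's theorem, odd case: in `Cl(p,q)` of odd dimension `n = p + q`, if
`T₁, T₂` are invertible and `γ^a = T₁⁻¹ β^a T₁ = T₂⁻¹ β^a T₂` for all `a`, then `T₁ T₂⁻¹` is
central, i.e. `T₁ = Z T₂` for some invertible central `Z ∈ span{e, e^{1…n}}`. -/
theorem stmt17 {F : Type*} [RCLike F] (p q n : ℕ) (hn : n = p + q) (hodd : Odd n)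
    {A : Type*} [Ring A] [Algebra F A]
    (e : Fin n → A)
    (hrele : ∀ a b : Fin n, e a * e b + e b * e a = ((2 * eta p a b : ℤ) : A))
    (bE : Module.Basis (Finset (Fin n)) F A)
    (hbE : ∀ s, bE s = cliffProd e s)
    (γ β : Fin n → A)
    (hγ : ∀ a b : Fin n, γ a * γ b + γ b * γ a = ((2 * eta p a b : ℤ) : A))
    (hβ : ∀ a b : Fin n, β a * β b + β b * β a = ((2 * eta p a b : ℤ) : A))
    (T₁ T₂ : A) (hT₁ : IsUnit T₁) (hT₂ : IsUnit T₂)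
    (hc₁ : ∀ a : Fin n, γ a = Ring.inverse T₁ * β a * T₁)
    (hc₂ : ∀ a : Fin n, γ a = Ring.inverse T₂ * β a * T₂) :
    (∀ U : A, T₁ * Ring.inverse T₂ * U = U * (T₁ * Ring.inverse T₂)) ∧
    ∃ Z : A, IsUnit Z ∧ (∀ U : A, Z * U = U * Z) ∧
      Z ∈ Submodule.span F ({1, cliffProd e Finset.univ} : Set A) ∧ T₁ = Z * T₂ := by
  classical
  have hn0 : n ≠ 0 := by rintro rfl; simpa using hodd
  set η' : Fin n → F := etaF F p with hη'def
  have hpm : ∀ a, η' a = 1 ∨ η' a = -1 := etaF_pm p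
  have hsqe : ∀ a, e a * e a = η' a • 1 := rel_sq hrele
  have hace : ∀ a b : Fin n, a ≠ b → e a * e b = -(e b * e a) := fun _ _ hab => rel_ac hrele hab
  have hsqβ : ∀ a, β a * β a = η' a • 1 := rel_sq hβ
  have hacβ : ∀ a b : Fin n, a ≠ b → β a * β b = -(β b * β a) := fun _ _ hab => rel_ac hβ hab
  -- the span of the e-products is everything
  have hspan : Submodule.span F (Set.range fun s : Finset (Fin n) => cliffProd e s) = ⊤ := by
    have h1 : (fun s : Finset (Fin n) => bE s) = fun s => cliffProd e s := funext hbE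
    rw [← h1]
    exact bE.span_eq
  -- the top element ω is central
  set ω : A := cliffProd e Finset.univ with hωdef
  have hωa : ∀ a, e a * ω = ω * e a := top_comm hsqe hace hpm hodd
  have hωU : ∀ U : A, ω * U = U * ω := by
    refine commute_all hspan fun s => ?_
    rw [cliffProd_eq_lp]
    exact commute_lp (fun a => (hωa a).symm) _
  -- squares of the top elements
  set ωβ : A := cliffProd β Finset.univ with hωβdef
  have hωβa : ∀ a, β a * ωβ = ωβ * β a := top_comm hsqβ hacβ hpm hodd
  set lF : F := sqc η' (Finset.univ.sort (· ≤ ·)) with hlFdef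
  have hlpm : lF = 1 ∨ lF = -1 := sqc_pm hpm _
  have hl2 : lF * lF = 1 := by rcases hlpm with h | h <;> rw [h] <;> norm_num
  have hω2 : ω * ω = lF • 1 := by
    rw [hωdef, cliffProd_eq_lp]
    exact lp_sq hsqe hace (Finset.sort_nodup _ _)
  have hωβ2 : ωβ * ωβ = lF • 1 := by
    rw [hωβdef, cliffProd_eq_lp]
    exact lp_sq hsqβ hacβ (Finset.sort_nodup _ _)
  -- Z commutes with the β's
  set Z : A := T₁ * Ring.inverse T₂ with hZdef
  have hinv1 : T₁ * Ring.inverse T₁ = 1 := Ring.mul_inverse_cancel _ hT₁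
  have hinv2 : Ring.inverse T₂ * T₂ = 1 := Ring.inverse_mul_cancel _ hT₂
  have hinv2' : T₂ * Ring.inverse T₂ = 1 := Ring.mul_inverse_cancel _ hT₂
  have hZβ : ∀ a, Z * β a = β a * Z := by
    intro a
    have h1 : T₁ * (Ring.inverse T₁ * β a * T₁) * Ring.inverse T₂
        = T₁ * (Ring.inverse T₂ * β a * T₂) * Ring.inverse T₂ := by rw [← hc₁ a, ← hc₂ a]
    calc Z * β a = T₁ * Ring.inverse T₂ * β a * (T₂ * Ring.inverse T₂) := by
          rw [hinv2', mul_one]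
      _ = T₁ * (Ring.inverse T₂ * β a * T₂) * Ring.inverse T₂ := by
          simp only [mul_assoc]
      _ = T₁ * (Ring.inverse T₁ * β a * T₁) * Ring.inverse T₂ := h1.symm
      _ = (T₁ * Ring.inverse T₁) * (β a * (T₁ * Ring.inverse T₂)) := by
          simp only [mul_assoc]
      _ = β a * Z := by rw [hinv1, one_mul, hZdef]
  -- the auxiliary unit u with u² = 1 which fixes the top element
  set u : A := lF • (ω * ωβ) with hudef
  have huβ : ∀ a, u * β a = β a * u := by
    intro a
    rw [hudef, smul_mul_assoc, mul_smul_comm]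
    congr 1
    calc ω * ωβ * β a = ω * (β a * ωβ) := by rw [mul_assoc, ← hωβa a]
      _ = (ω * β a) * ωβ := by rw [mul_assoc]
      _ = β a * (ω * ωβ) := by rw [hωU (β a), mul_assoc]
  have hu2 : u * u = 1 := by
    rw [hudef, smul_mul_assoc, mul_smul_comm, smul_smul, hl2, one_smul]
    calc ω * ωβ * (ω * ωβ) = ω * ((ωβ * ω) * ωβ) := by simp only [mul_assoc]
      _ = ω * ((ω * ωβ) * ωβ) := by rw [← hωU ωβ]
      _ = ω * (ω * (ωβ * ωβ)) := by simp only [mul_assoc]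
      _ = 1 := by
          rw [hωβ2, mul_smul_comm, mul_one, mul_smul_comm, hω2, smul_smul, hl2,
            one_smul]
  -- the twisted family δ = u β
  set δ : Fin n → A := fun a => u * β a with hδdef
  have hδmul : ∀ a b, δ a * δ b = β a * β b := by
    intro a b
    calc (u * β a) * (u * β b) = u * ((β a * u) * β b) := by simp only [mul_assoc]
      _ = u * u * (β a * β b) := by rw [← huβ a]; simp only [mul_assoc]
      _ = β a * β b := by rw [hu2, one_mul]
  have hsqδ : ∀ a, δ a * δ a = η' a • 1 := fun a => by rw [hδmul a a]; exact hsqβ a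
  have hacδ : ∀ a b : Fin n, a ≠ b → δ a * δ b = -(δ b * δ a) := fun a b hab => by
    rw [hδmul a b, hδmul b a]; exact hacβ a b hab
  -- δ has the same top element ω
  have hlpδ : ∀ l : List (Fin n), lp δ l = u ^ l.length * lp β l := by
    intro l
    induction l with
    | nil => simp
    | cons a t ih =>
      have hcomm : β a * u ^ t.length = u ^ t.length * β a :=
        ((Commute.pow_right (Commute.symm (huβ a)) t.length)).symm ▸ rfl
      rw [lp_cons, lp_cons, ih, hδdef]
      calc u * β a * (u ^ t.length * lp β t) = u * ((β a * u ^ t.length) * lp β t) := by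
            simp only [mul_assoc]
        _ = u * (u ^ t.length * (β a * lp β t)) := by rw [hcomm, mul_assoc]
        _ = u ^ (a :: t).length * (β a * lp β t) := by
            rw [← mul_assoc, List.length_cons, pow_succ']
  have hδuniv : cliffProd δ Finset.univ = ω := by
    rw [cliffProd_eq_lp, hlpδ, Finset.length_sort, Finset.card_univ, Fintype.card_fin]
    have hun : u ^ n = u := by
      obtain ⟨k, hk⟩ := hodd
      rw [hk, pow_succ, pow_mul, show u ^ 2 = 1 by rw [pow_two, hu2], one_pow, one_mul]
    rw [hun, ← cliffProd_eq_lp, ← hωβdef, hudef, smul_mul_assoc, mul_assoc, hωβ2,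
      mul_smul_comm, mul_one, smul_smul, hl2, one_smul]
  -- Z commutes with the δ's
  have hZωβ : Z * ωβ = ωβ * Z := by
    rw [hωβdef, cliffProd_eq_lp]
    exact commute_lp hZβ _
  have hZu : Z * u = u * Z := by
    rw [hudef, mul_smul_comm, smul_mul_assoc]
    congr 1
    calc Z * (ω * ωβ) = (ω * Z) * ωβ := by rw [← mul_assoc, ← hωU Z]
      _ = ω * (ωβ * Z) := by rw [mul_assoc, hZωβ]
      _ = ω * ωβ * Z := by rw [mul_assoc]
  have hZδ : ∀ a, Z * δ a = δ a * Z := by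
    intro a
    rw [hδdef]
    calc Z * (u * β a) = (u * Z) * β a := by rw [← mul_assoc, hZu]
      _ = u * (β a * Z) := by rw [mul_assoc, hZβ a]
      _ = u * β a * Z := by rw [mul_assoc]
  -- basis facts
  have hNe : Nonempty (Fin n) := ⟨⟨0, Nat.pos_of_ne_zero hn0⟩⟩
  have hune : (Finset.univ : Finset (Fin n)) ≠ (∅ : Finset (Fin n)) :=
    Finset.nonempty_iff_ne_empty.mp Finset.univ_nonempty
  have h1b : (1 : A) = bE ∅ := by rw [hbE, cliffProd_empty]
  have hωb : ω = bE Finset.univ := (hbE _).symm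
  -- linear independence of the δ-products
  have hgzero : ∀ g : Finset (Fin n) → F,
      (∑ s : Finset (Fin n), g s • cliffProd δ s = 0) → ∀ t, g t = 0 := by
    intro g hg t
    have hpair := indep_pair hsqδ hacδ hpm hodd hg t
    obtain ⟨ε, hε, hεe⟩ := cliff_mul_compl (F := F) hacδ t
    have hsqt : cliffProd δ t * cliffProd δ t = sqc η' (t.sort (· ≤ ·)) • 1 := by
      rw [cliffProd_eq_lp]
      exact lp_sq hsqδ hacδ (Finset.sort_nodup _ _)
    have hcpm := sqc_pm hpm (t.sort (· ≤ ·))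
    have h2 := congrArg (fun X : A => cliffProd δ t * X) hpair
    simp only [mul_add, mul_smul_comm, mul_zero] at h2
    rw [hsqt, hεe, hδuniv] at h2
    rw [smul_smul, smul_smul, h1b, hωb] at h2
    have h3 := congrArg (fun x => bE.repr x ∅) h2
    simp only [map_add, map_smul, map_zero, Module.Basis.repr_self, Finsupp.add_apply,
      Finsupp.smul_apply, Finsupp.coe_zero, Pi.zero_apply, smul_eq_mul] at h3
    rw [Finsupp.single_apply, Finsupp.single_apply, if_pos rfl, if_neg hune, mul_one,
      mul_zero, add_zero] at h3
    rcases hcpm with h | h <;> rw [h] at h3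
    · simpa using h3
    · rw [mul_neg_one, neg_eq_zero] at h3
      exact h3
  have hLI : LinearIndependent F (fun s : Finset (Fin n) => cliffProd δ s) :=
    Fintype.linearIndependent_iff.mpr fun g hg => hgzero g hg
  haveI : FiniteDimensional F A := Module.Finite.of_basis bE
  have hcard : Fintype.card (Finset (Fin n)) = Module.finrank F A :=
    (Module.finrank_eq_card_basis bE).symm
  have hspanδ : Submodule.span F (Set.range fun s : Finset (Fin n) => cliffProd δ s) = ⊤ :=
    hLI.span_eq_top_of_card_eq_finrank hcard
  -- Z is central
  have hZU : ∀ U : A, Z * U = U * Z := by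
    refine commute_all hspanδ fun s => ?_
    rw [cliffProd_eq_lp]
    exact commute_lp hZδ _
  refine ⟨hZU, Z, hT₁.mul (isUnit_ringInverse.mpr hT₂), hZU, ?_, ?_⟩
  · -- Z lies in the span of {1, ω}
    have hsum : ∑ s : Finset (Fin n), bE.repr Z s • bE s = Z := bE.sum_repr Z
    have hcoeff : ∀ (a : Fin n) (s : Finset (Fin n)),
        bE.repr Z s * sgn F s a = bE.repr Z s := by
      intro a s
      have hη : η' a * η' a = 1 := by rcases hpm a with h | h <;> rw [h] <;> norm_num
      have hZa : η' a • (e a * Z * e a) = Z := by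
        rw [mul_assoc, hZU (e a), ← mul_assoc, hsqe a, smul_mul_assoc, one_mul,
          smul_smul, hη, one_smul]
      have h6 : η' a • (e a * Z * e a)
          = ∑ s : Finset (Fin n), (bE.repr Z s * sgn F s a) • bE s := by
        conv_lhs => rw [← hsum]
        rw [Finset.mul_sum, Finset.sum_mul, Finset.smul_sum]
        refine Finset.sum_congr rfl fun s _ => ?_
        rw [mul_smul_comm, smul_mul_assoc, hbE s, sandwich_cliff hsqe hace s a]
        rw [smul_smul, smul_smul, ← hbE s]
        congr 1
        calc η' a * bE.repr Z s * (η' a * sgn F s a)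
            = (η' a * η' a) * (bE.repr Z s * sgn F s a) := by ring
          _ = bE.repr Z s * sgn F s a := by rw [hη, one_mul]
      have h7 : ∑ s : Finset (Fin n), ((bE.repr Z s * sgn F s a) - bE.repr Z s) • bE s = 0 := by
        simp only [sub_smul, Finset.sum_sub_distrib, ← h6, hZa, hsum, sub_self]
      have h8 := Fintype.linearIndependent_iff.mp bE.linearIndependent
        (fun s => (bE.repr Z s * sgn F s a) - bE.repr Z s) h7 s
      have h9 : bE.repr Z s * sgn F s a - bE.repr Z s = 0 := h8
      exact sub_eq_zero.mp h9
    have hvanish : ∀ s : Finset (Fin n), s ≠ ∅ → s ≠ Finset.univ → bE.repr Z s = 0 := by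
      intro s hs1 hs2
      by_contra hcs
      have hsg1 : ∀ a, sgn F s a = 1 := by
        intro a
        refine mul_left_cancel₀ hcs ?_
        rw [mul_one, hcoeff a s]
      obtain ⟨a₁, ha₁⟩ := Finset.nonempty_iff_ne_empty.mpr hs1
      obtain ⟨a₂, ha₂⟩ : ∃ a, a ∉ s := by
        by_contra hall
        push_neg at hall
        exact hs2 (Finset.eq_univ_iff_forall.mpr hall)
      have hp1 : (s.erase a₁).card % 2 = 0 % 2 := by
        rw [← neg_one_pow_eq_iff (F := F), pow_zero]
        exact hsg1 a₁
      have hp2 : (s.erase a₂).card % 2 = 0 % 2 := by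
        rw [← neg_one_pow_eq_iff (F := F), pow_zero]
        exact hsg1 a₂
      rw [Finset.card_erase_of_mem ha₁] at hp1
      rw [Finset.erase_eq_of_notMem ha₂] at hp2
      have hscard : 1 ≤ s.card := Finset.card_pos.mpr ⟨a₁, ha₁⟩
      omega
    have hZeq : ∑ s ∈ ({∅, Finset.univ} : Finset (Finset (Fin n))),
        bE.repr Z s • bE s = Z := by
      conv_rhs => rw [← hsum]
      exact Finset.sum_subset (Finset.subset_univ _) fun s _ hs => by
        simp only [Finset.mem_insert, Finset.mem_singleton] at hs
        push_neg at hs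
        rw [hvanish s hs.1.ne_empty hs.2, zero_smul]
    have hZexpr : Z = bE.repr Z ∅ • (1 : A) + bE.repr Z Finset.univ • ω := by
      conv_lhs => rw [← hZeq]
      rw [Finset.sum_pair (Ne.symm hune), ← h1b, ← hωb]
    rw [hZexpr]
    refine Submodule.add_mem _ (Submodule.smul_mem _ _ ?_) (Submodule.smul_mem _ _ ?_)
    · exact Submodule.subset_span (Set.mem_insert _ _)
    · exact Submodule.subset_span (Set.mem_insert_of_mem _ rfl)
  · rw [hZdef, mul_assoc, hinv2, mul_one]
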